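/- Fix c with 0 < c < 1, and suppose that for every group a ∈ G the conditional law of p(X) given g(X) = a has positive density on [0,1], and that μ(Y = 0, g(X) = a) > 0 for every a ∈ G. If d and d' are two decision rules that both satisfy predictive equality and both attain the maximum of u(·,c) over all decision rules satisfying predictive equality, then d(X) = d'(X) μ-almost surely. -/

import Mathlib

open MeasureTheory ProbabilityTheory Set

noncomputable section

/-- bounded measurable implies integrable on a finite measure space -/
lemma bdd_intg {Ω : Type*} [MeasurableSpace Ω] (μ : Measure Ω) [IsFiniteMeasure μ]
    {f : Ω → ℝ} (hf : Measurable f) {C : ℝ} (hb : ∀ ω, |f ω| ≤ C) : Integrable f μ :=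
  ⟨hf.aestronglyMeasurable, HasFiniteIntegral.of_bounded (C := C) (ae_of_all _ hb)⟩

/-- strict positivity of a set integral -/
lemma setIntegral_pos' {Ω : Type*} [MeasurableSpace Ω] {μ : Measure Ω}
    {f : Ω → ℝ} {A : Set Ω} (hA : MeasurableSet A) (hf : IntegrableOn f A μ)
    (h0 : ∀ ω ∈ A, 0 ≤ f ω) (hsup : 0 < μ (A ∩ {ω | 0 < f ω})) :
    0 < ∫ ω in A, f ω ∂μ := by
  rw [setIntegral_pos_iff_support_of_nonneg_ae ?_ hf]
  · refine lt_of_lt_of_le hsup (measure_mono ?_)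
    rintro ω ⟨hωA, hωf⟩
    exact ⟨ne_of_gt hωf, hωA⟩
  · filter_upwards [ae_restrict_mem hA] with ω hω using h0 ω hω

/-- splitting a positive-measure set by a non-atomic function -/
lemma exists_split {Ω : Type*} [MeasurableSpace Ω] {μ : Measure Ω}
    {f : Ω → ℝ} {S : Set Ω} (hpos : 0 < μ S)
    (hatom : ∀ t : ℝ, μ (S ∩ {ω | f ω = t}) = 0) :
    ∃ s : ℝ, 0 < μ (S ∩ {ω | f ω < s}) ∧ 0 < μ (S ∩ {ω | s < f ω}) := by
  by_contra hcon
  push_neg at hcon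
  -- for each s, one of the two sets is null
  have hone : ∀ s : ℝ, μ (S ∩ {ω | f ω < s}) = 0 ∨ μ (S ∩ {ω | s < f ω}) = 0 := by
    intro s
    rcases Classical.em (μ (S ∩ {ω | f ω < s}) = 0) with h | h
    · exact Or.inl h
    · exact Or.inr (le_antisymm (hcon s (pos_iff_ne_zero.mpr h)) (zero_le))
  -- lower part all null case
  rcases Classical.em (∀ s : ℝ, μ (S ∩ {ω | f ω < s}) = 0) with hall | hnall
  · -- S is a countable union of null sets
    have : μ S = 0 := by
      have hS : S ⊆ ⋃ n : ℕ, S ∩ {ω | f ω < n} := by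
        intro ω hω
        obtain ⟨n, hn⟩ := exists_nat_gt (f ω)
        exact mem_iUnion.mpr ⟨n, hω, hn⟩
      exact measure_mono_null hS (measure_iUnion_null fun n => hall n)
    exact absurd this (ne_of_gt hpos)
  push_neg at hnall
  obtain ⟨s₀, hs₀⟩ := hnall
  -- t := sup of s with lower part null; s₀ is an upper bound
  set T : Set ℝ := {s | μ (S ∩ {ω | f ω < s}) = 0} with hT
  have hTne : T.Nonempty := by
    rcases Classical.em (∃ s, s ∈ T) with h | h
    · exact h
    · push_neg at h
      exfalso
      -- then upper parts all null and S null
      have : μ S = 0 := by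
        have hS : S ⊆ ⋃ n : ℕ, S ∩ {ω | (-(n:ℝ)) < f ω} := by
          intro ω hω
          obtain ⟨n, hn⟩ := exists_nat_gt (-(f ω))
          refine mem_iUnion.mpr ⟨n, hω, ?_⟩
          simp only [mem_setOf_eq]; linarith
        refine measure_mono_null hS (measure_iUnion_null fun n => ?_)
        rcases hone (-(n:ℝ)) with h' | h'
        · exact absurd h' (h _)
        · exact h'
      exact absurd this (ne_of_gt hpos)
  have hmono : ∀ s s' : ℝ, s ≤ s' → s' ∈ T → s ∈ T := by
    intro s s' hss hs'
    refine le_antisymm (le_trans (measure_mono ?_) (le_of_eq hs')) (zero_le)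
    exact inter_subset_inter_right _ (fun ω hω => lt_of_lt_of_le hω hss)
  have hbdd : ∀ s ∈ T, s ≤ s₀ := by
    intro s hs
    by_contra hlt
    exact hs₀ (hmono s₀ s (le_of_not_ge hlt) hs)
  set t : ℝ := sSup T with ht
  have hlow : μ (S ∩ {ω | f ω < t}) = 0 := by
    have hS : S ∩ {ω | f ω < t} ⊆ ⋃ n : ℕ, S ∩ {ω | f ω < t - 1/(n+1)} := by
      rintro ω ⟨hωS, hωf⟩
      obtain ⟨n, hn⟩ := exists_nat_one_div_lt (K := ℝ) (sub_pos.mpr hωf)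
      exact mem_iUnion.mpr ⟨n, hωS, by simp only [mem_setOf_eq]; linarith⟩
    refine measure_mono_null hS (measure_iUnion_null fun n => ?_)
    -- t - 1/(n+1) < t = sSup T so some element of T exceeds it
    have h1 : (0:ℝ) < 1/(n+1) := by positivity
    obtain ⟨s, hsT, hs⟩ := exists_lt_of_lt_csSup hTne (by linarith : t - 1/(n+1) < t)
    exact hmono _ s (le_of_lt hs) hsT
  have hhigh : μ (S ∩ {ω | t < f ω}) = 0 := by
    have hS : S ∩ {ω | t < f ω} ⊆ ⋃ n : ℕ, S ∩ {ω | t + 1/(n+1) < f ω} := by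
      rintro ω ⟨hωS, hωf⟩
      obtain ⟨n, hn⟩ := exists_nat_one_div_lt (K := ℝ) (sub_pos.mpr hωf)
      exact mem_iUnion.mpr ⟨n, hωS, by simp only [mem_setOf_eq]; linarith⟩
    refine measure_mono_null hS (measure_iUnion_null fun n => ?_)
    have h1 : (0:ℝ) < 1/(n+1) := by positivity
    rcases hone (t + 1/(n+1)) with h' | h'
    · -- then t + 1/(n+1) ∈ T, contradicting sup
      exfalso
      have : t + 1/(n+1) ≤ t := le_csSup ⟨s₀, hbdd⟩ h'
      linarith
    · exact h'
  have : μ S = 0 := by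
    have hS : S ⊆ (S ∩ {ω | f ω < t}) ∪ ((S ∩ {ω | f ω = t}) ∪ (S ∩ {ω | t < f ω})) := by
      intro ω hω
      rcases lt_trichotomy (f ω) t with h | h | h
      · exact Or.inl ⟨hω, h⟩
      · exact Or.inr (Or.inl ⟨hω, h⟩)
      · exact Or.inr (Or.inr ⟨hω, h⟩)
    refine measure_mono_null hS ?_
    refine measure_union_null hlow (measure_union_null (hatom t) hhigh)
  exact absurd this (ne_of_gt hpos)

/-- A probability law on ℝ has positive density on `[0,1]`. -/
def PosDensity01 (ν : Measure ℝ) : Prop :=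
  ∃ φ : ℝ → ENNReal,
    ν = volume.withDensity φ ∧
    (∀ᵐ x ∂(volume.restrict (Icc (0:ℝ) 1)), 0 < φ x) ∧
    (∀ᵐ x ∂(volume : Measure ℝ), x ∉ Icc (0:ℝ) 1 → φ x = 0)

/-- A decision rule `d` satisfies predictive equality. -/
def PredEq {Ω 𝒳 G : Type*} [MeasurableSpace Ω]
    (μ : Measure Ω) (X : Ω → 𝒳) (Y : Ω → ℝ) (g : 𝒳 → G) (d : 𝒳 → ℝ) : Prop :=
  ∀ a : G,
    (∫ ω in {ω | Y ω = 0 ∧ g (X ω) = a}, d (X ω) ∂μ)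
        / (μ {ω | Y ω = 0 ∧ g (X ω) = a}).toReal
      = (∫ ω in {ω | Y ω = 0}, d (X ω) ∂μ) / (μ {ω | Y ω = 0}).toReal

lemma abs_mul_le_one {a b : ℝ} (ha : |a| ≤ 1) (hb : |b| ≤ 1) : |a * b| ≤ 1 := by
  rw [abs_mul]; nlinarith [abs_nonneg a, abs_nonneg b]

set_option maxHeartbeats 3000000 in
/-- if `d` and `d'` both satisfy predictive equality and both attain the
maximum of `u(·,c)` over decision rules satisfying predictive equality, then
`d(X) = d'(X)` μ-almost surely. -/
theorem stmt_8
    {Ω 𝒳 G : Type*} [MeasurableSpace Ω] [MeasurableSpace 𝒳]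
    [Fintype G] [MeasurableSpace G] [MeasurableSingletonClass G]
    (μ : Measure Ω) [IsProbabilityMeasure μ]
    (X : Ω → 𝒳) (hX : Measurable X)
    (Y : Ω → ℝ) (hY : Measurable Y) (hY01 : ∀ ω, Y ω = 0 ∨ Y ω = 1)
    (p : 𝒳 → ℝ) (hp : Measurable p) (hp01 : ∀ x, p x ∈ Icc (0:ℝ) 1)
    (hrisk : ∀ f : 𝒳 → ℝ, Measurable f → (∃ C, ∀ x, |f x| ≤ C) →
      ∫ ω, Y ω * f (X ω) ∂μ = ∫ ω, p (X ω) * f (X ω) ∂μ)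
    (g : 𝒳 → G) (hg : Measurable g)
    (hgpos : ∀ a : G, 0 < μ {ω | g (X ω) = a})
    (hdens : ∀ a : G,
      PosDensity01 (Measure.map (fun ω => p (X ω))
        (ProbabilityTheory.cond μ {ω | g (X ω) = a})))
    (hY0pos : ∀ a : G, 0 < μ {ω | Y ω = 0 ∧ g (X ω) = a})
    (c : ℝ) (hc0 : 0 < c) (hc1 : c < 1)
    (d d' : 𝒳 → ℝ)
    (hd : Measurable d) (hd01 : ∀ x, d x ∈ Icc (0:ℝ) 1) (hdP : PredEq μ X Y g d)
    (hd' : Measurable d') (hd01' : ∀ x, d' x ∈ Icc (0:ℝ) 1) (hdP' : PredEq μ X Y g d')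
    (hmax : ∀ e : 𝒳 → ℝ, Measurable e → (∀ x, e x ∈ Icc (0:ℝ) 1) → PredEq μ X Y g e →
      (∫ ω, Y ω * e (X ω) ∂μ) - c * ∫ ω, e (X ω) ∂μ
        ≤ (∫ ω, Y ω * d (X ω) ∂μ) - c * ∫ ω, d (X ω) ∂μ)
    (hmax' : ∀ e : 𝒳 → ℝ, Measurable e → (∀ x, e x ∈ Icc (0:ℝ) 1) → PredEq μ X Y g e →
      (∫ ω, Y ω * e (X ω) ∂μ) - c * ∫ ω, e (X ω) ∂μ
        ≤ (∫ ω, Y ω * d' (X ω) ∂μ) - c * ∫ ω, d' (X ω) ∂μ) :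
    ∀ᵐ ω ∂μ, d (X ω) = d' (X ω) := by
  classical
  -- abbreviations for bounds
  have habs : ∀ (e : 𝒳 → ℝ), (∀ x, e x ∈ Icc (0:ℝ) 1) → ∀ x, |e x| ≤ 1 := by
    intro e he x
    rw [abs_le]; exact ⟨by linarith [(he x).1], (he x).2⟩
  have hpabs : ∀ x, |p x| ≤ 1 := habs p hp01
  have hYabs : ∀ ω, |Y ω| ≤ 1 := by
    intro ω; rcases hY01 ω with h | h <;> rw [h] <;> norm_num
  have hb1p : ∀ x, |1 - p x| ≤ 1 := by
    intro x; rw [abs_le]; constructor <;> linarith [(hp01 x).1, (hp01 x).2]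
  have hbpc : ∀ x, |p x - c| ≤ 1 := by
    intro x; rw [abs_le]; constructor <;> linarith [(hp01 x).1, (hp01 x).2]
  -- integrability of bounded measurable functions
  have intg : ∀ (f : Ω → ℝ), Measurable f → ∀ (C : ℝ), (∀ ω, |f ω| ≤ C) → Integrable f μ :=
    fun f hf C hb => bdd_intg μ hf hb
  -- conversion of set integrals over {Y = 0} into weighted integrals
  have hconv : ∀ (f : 𝒳 → ℝ), Measurable f → (∀ x, |f x| ≤ 1) →
      ∫ ω in {ω | Y ω = 0}, f (X ω) ∂μ = ∫ ω, (1 - p (X ω)) * f (X ω) ∂μ := by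
    intro f hf hb
    have hmeas : MeasurableSet {ω | Y ω = 0} := hY (measurableSet_singleton 0)
    rw [← integral_indicator hmeas]
    have h2 : ∀ ω, ({ω | Y ω = 0}).indicator (fun ω => f (X ω)) ω
        = f (X ω) - Y ω * f (X ω) := by
      intro ω
      rcases hY01 ω with h | h
      · rw [Set.indicator_of_mem (show ω ∈ {ω | Y ω = 0} from h), h]; ring
      · rw [Set.indicator_of_notMem (by simp [mem_setOf_eq, h]), h]; ring
    rw [integral_congr_ae (ae_of_all _ h2),
      integral_sub (intg (fun ω => f (X ω)) (hf.comp hX) 1 (fun ω => hb _))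
        (intg (fun ω => Y ω * f (X ω)) (hY.mul (hf.comp hX)) 1 (fun ω => abs_mul_le_one (hYabs _) (hb _))),
      hrisk f hf ⟨1, hb⟩,
      ← integral_sub (intg (fun ω => f (X ω)) ((hf.comp hX)) 1 (fun ω => hb _))
        (intg (fun ω => p (X ω) * f (X ω)) ((hp.comp hX).mul (hf.comp hX)) 1
          (fun ω => abs_mul_le_one (hpabs _) (hb _)))]
    exact integral_congr_ae (ae_of_all _ fun ω => by ring)
  have hconva : ∀ (f : 𝒳 → ℝ), Measurable f → (∀ x, |f x| ≤ 1) → ∀ a : G,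
      ∫ ω in {ω | Y ω = 0 ∧ g (X ω) = a}, f (X ω) ∂μ
        = ∫ ω, (1 - p (X ω)) * (if g (X ω) = a then f (X ω) else 0) ∂μ := by
    intro f hf hb a
    have hfa : Measurable (fun x => if g x = a then f x else 0) :=
      Measurable.ite (hg (measurableSet_singleton a)) hf measurable_const
    have hba : ∀ x, |if g x = a then f x else 0| ≤ 1 := by
      intro x; split
      · exact hb x
      · norm_num
    have hmeas0 : MeasurableSet {ω | Y ω = 0} := hY (measurableSet_singleton 0)
    have hmeas1 : MeasurableSet {ω | Y ω = 0 ∧ g (X ω) = a} := by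
      rw [show {ω | Y ω = 0 ∧ g (X ω) = a}
          = {ω | Y ω = 0} ∩ {ω | g (X ω) = a} from rfl]
      exact hmeas0.inter ((hg.comp hX) (measurableSet_singleton a))
    have step : ∫ ω in {ω | Y ω = 0 ∧ g (X ω) = a}, f (X ω) ∂μ
        = ∫ ω in {ω | Y ω = 0}, (fun x => if g x = a then f x else 0) (X ω) ∂μ := by
      rw [← integral_indicator hmeas1, ← integral_indicator hmeas0]
      refine integral_congr_ae (ae_of_all _ fun ω => ?_)
      by_cases h0 : Y ω = 0
      · by_cases hga : g (X ω) = a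
        · rw [Set.indicator_of_mem
              (show ω ∈ {ω | Y ω = 0 ∧ g (X ω) = a} from ⟨h0, hga⟩),
            Set.indicator_of_mem (show ω ∈ {ω | Y ω = 0} from h0)]
          simp [hga]
        · rw [Set.indicator_of_notMem (by simp [mem_setOf_eq, h0, hga]),
            Set.indicator_of_mem (show ω ∈ {ω | Y ω = 0} from h0)]
          simp [hga]
      · rw [Set.indicator_of_notMem (by simp [mem_setOf_eq, h0]),
          Set.indicator_of_notMem (by simp [mem_setOf_eq, h0])]
    rw [step, hconv _ hfa hba]
  -- p(X) has no atoms within any group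
  have hatomless : ∀ (b : G) (t : ℝ), μ {ω | p (X ω) = t ∧ g (X ω) = b} = 0 := by
    intro b t
    obtain ⟨φ, hφ, -, -⟩ := hdens b
    have hAmeas : MeasurableSet {ω | g (X ω) = b} :=
      (hg.comp hX) (measurableSet_singleton b)
    have hmap : Measure.map (fun ω => p (X ω))
        (ProbabilityTheory.cond μ {ω | g (X ω) = b}) {t} = 0 := by
      rw [hφ, withDensity_apply _ (measurableSet_singleton t),
        Measure.restrict_eq_zero.mpr (measure_singleton t), lintegral_zero_measure]
    rw [Measure.map_apply (show Measurable (fun ω => p (X ω)) from hp.comp hX) (measurableSet_singleton t),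
      cond_apply hAmeas] at hmap
    have hA0 : (μ {ω | g (X ω) = b})⁻¹ ≠ 0 :=
      ENNReal.inv_ne_zero.mpr (measure_ne_top μ _)
    have hz := (mul_eq_zero.mp hmap).resolve_left hA0
    refine measure_mono_null ?_ hz
    rintro ω ⟨h1, h2⟩
    exact ⟨h2, h1⟩
  -- utility in terms of p
  have hU : ∀ e : 𝒳 → ℝ, Measurable e → (∀ x, |e x| ≤ 1) →
      (∫ ω, Y ω * e (X ω) ∂μ) - c * ∫ ω, e (X ω) ∂μ
        = ∫ ω, (p (X ω) - c) * e (X ω) ∂μ := by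
    intro e he hb
    rw [hrisk e he ⟨1, hb⟩,
      show c * ∫ ω, e (X ω) ∂μ = ∫ ω, c * e (X ω) ∂μ from (integral_const_mul c _).symm,
      ← integral_sub (intg (fun ω => p (X ω) * e (X ω)) ((hp.comp hX).mul (he.comp hX)) 1
          (fun ω => abs_mul_le_one (hpabs _) (hb _)))
        (intg (fun ω => c * e (X ω)) (measurable_const.mul (he.comp hX)) 1
          (fun ω => abs_mul_le_one (by rw [abs_of_pos hc0]; linarith) (hb _)))]
    exact integral_congr_ae (ae_of_all _ fun ω => by ring)
  -- the two optima have the same utility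
  have hudd' : ∫ ω, (p (X ω) - c) * d (X ω) ∂μ = ∫ ω, (p (X ω) - c) * d' (X ω) ∂μ := by
    have h1 := hmax d' hd' hd01' hdP'
    have h2 := hmax' d hd hd01 hdP
    rw [hU d hd (habs d hd01), hU d' hd' (habs d' hd01')] at h1 h2
    linarith
  -- the midpoint rule
  set m : 𝒳 → ℝ := fun x => (d x + d' x) / 2 with hm_def
  have hm : Measurable m := (hd.add hd').div_const 2
  have hm01 : ∀ x, m x ∈ Icc (0:ℝ) 1 := by
    intro x
    constructor
    · show 0 ≤ (d x + d' x) / 2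
      linarith [(hd01 x).1, (hd01' x).1]
    · show (d x + d' x) / 2 ≤ 1
      linarith [(hd01 x).2, (hd01' x).2]
  have hmb : ∀ x, |m x| ≤ 1 := habs m hm01
  -- midpoint satisfies predictive equality
  have hsplitInt : ∀ (T : Set Ω), ∫ ω in T, m (X ω) ∂μ
      = ((∫ ω in T, d (X ω) ∂μ) + ∫ ω in T, d' (X ω) ∂μ) / 2 := by
    intro T
    have : ∫ ω in T, m (X ω) ∂μ = ∫ ω in T, (d (X ω) + d' (X ω)) / 2 ∂μ := rfl
    rw [this, integral_div,
      integral_add ((intg (fun ω => d (X ω)) (hd.comp hX) 1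
          (fun ω => habs d hd01 _)).restrict)
        ((intg (fun ω => d' (X ω)) (hd'.comp hX) 1
          (fun ω => habs d' hd01' _)).restrict)]
  have hmP : PredEq μ X Y g m := by
    intro b
    rw [hsplitInt {ω | Y ω = 0 ∧ g (X ω) = b}, hsplitInt {ω | Y ω = 0}]
    set A := ∫ ω in {ω | Y ω = 0 ∧ g (X ω) = b}, d (X ω) ∂μ
    set A' := ∫ ω in {ω | Y ω = 0 ∧ g (X ω) = b}, d' (X ω) ∂μ
    set B := ∫ ω in {ω | Y ω = 0}, d (X ω) ∂μ
    set B' := ∫ ω in {ω | Y ω = 0}, d' (X ω) ∂μ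
    set D := (μ {ω | Y ω = 0 ∧ g (X ω) = b}).toReal
    set E := (μ {ω | Y ω = 0}).toReal
    have h1 : A / D = B / E := hdP b
    have h2 : A' / D = B' / E := hdP' b
    have e1 : (A + A') / 2 / D = (A / D + A' / D) / 2 := by ring
    have e2 : (B + B') / 2 / E = (B / E + B' / E) / 2 := by ring
    rw [e1, e2, h1, h2]
  -- midpoint attains the maximum utility
  have hum : ∫ ω, (p (X ω) - c) * m (X ω) ∂μ = ∫ ω, (p (X ω) - c) * d (X ω) ∂μ := by
    have : ∫ ω, (p (X ω) - c) * m (X ω) ∂μ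
        = ∫ ω, ((p (X ω) - c) * d (X ω) + (p (X ω) - c) * d' (X ω)) / 2 ∂μ := by
      refine integral_congr_ae (ae_of_all _ fun ω => ?_)
      show (p (X ω) - c) * ((d (X ω) + d' (X ω)) / 2) = _
      ring
    rw [this, integral_div,
      integral_add (intg (fun ω => (p (X ω) - c) * d (X ω))
          (((hp.comp hX).sub measurable_const).mul (hd.comp hX)) 1
          (fun ω => abs_mul_le_one (hbpc _) (habs d hd01 _)))
        (intg (fun ω => (p (X ω) - c) * d' (X ω))
          (((hp.comp hX).sub measurable_const).mul (hd'.comp hX)) 1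
          (fun ω => abs_mul_le_one (hbpc _) (habs d' hd01' _)))]
    rw [← hudd']
    ring
  -- the core claim: the midpoint rule is a.e. {0,1}-valued
  have key : ∀ (a : G) (ε : ℝ), 0 < ε →
      μ {ω | (ε ≤ m (X ω) ∧ m (X ω) ≤ 1 - ε) ∧ g (X ω) = a} = 0 := by
    intro a ε hε
    by_contra h0
    set T : Set 𝒳 := {x | (ε ≤ m x ∧ m x ≤ 1 - ε) ∧ g x = a} with hT_def
    have hSpos : 0 < μ (X ⁻¹' T) := pos_iff_ne_zero.mpr h0
    have hatomT : ∀ t : ℝ, μ (X ⁻¹' T ∩ {ω | p (X ω) = t}) = 0 := by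
      intro t
      refine measure_mono_null ?_ (hatomless a t)
      rintro ω ⟨hω1, hω2⟩
      exact ⟨hω2, hω1.2⟩
    obtain ⟨s, hs1, hs2⟩ := exists_split (f := fun ω => p (X ω)) hSpos hatomT
    have hs_lt1 : s < 1 := by
      by_contra hcon
      push_neg at hcon
      have hz : μ (X ⁻¹' T ∩ {ω | s < p (X ω)}) = 0 := by
        refine measure_mono_null (fun ω hω => ?_) (measure_empty (μ := μ))
        exact absurd hω.2 (by simp only [mem_setOf_eq]; linarith [(hp01 (X ω)).2])
      exact absurd hz (ne_of_gt hs2)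
    have hs_gt0 : 0 < s := by
      by_contra hcon
      push_neg at hcon
      have hz : μ (X ⁻¹' T ∩ {ω | p (X ω) < s}) = 0 := by
        refine measure_mono_null (fun ω hω => ?_) (measure_empty (μ := μ))
        exact absurd hω.2 (by simp only [mem_setOf_eq]; linarith [(hp01 (X ω)).1])
      exact absurd hz (ne_of_gt hs1)
    -- the two halves of T
    set S1 : Set 𝒳 := T ∩ {x | p x < s} with hS1_def
    set S2 : Set 𝒳 := T ∩ {x | s < p x} with hS2_def
    have hTmeas : MeasurableSet T := by
      have h1 : MeasurableSet {x | ε ≤ m x} := measurableSet_le measurable_const hm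
      have h2 : MeasurableSet {x | m x ≤ 1 - ε} := measurableSet_le hm measurable_const
      have h3 : MeasurableSet {x | g x = a} := hg (measurableSet_singleton a)
      exact (h1.inter h2).inter h3
    have hS1meas : MeasurableSet S1 := hTmeas.inter (measurableSet_lt hp measurable_const)
    have hS2meas : MeasurableSet S2 := hTmeas.inter (measurableSet_lt measurable_const hp)
    have hs1' : 0 < μ (X ⁻¹' S1) := hs1
    have hs2' : 0 < μ (X ⁻¹' S2) := hs2
    set χ1 : 𝒳 → ℝ := S1.indicator (fun _ => (1:ℝ)) with hχ1_def
    set χ2 : 𝒳 → ℝ := S2.indicator (fun _ => (1:ℝ)) with hχ2_def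
    have hχ1val : ∀ x, χ1 x = if x ∈ S1 then 1 else 0 := fun x => by
      rw [hχ1_def, Set.indicator_apply]
    have hχ2val : ∀ x, χ2 x = if x ∈ S2 then 1 else 0 := fun x => by
      rw [hχ2_def, Set.indicator_apply]
    have hχ1meas : Measurable χ1 := measurable_const.indicator hS1meas
    have hχ2meas : Measurable χ2 := measurable_const.indicator hS2meas
    have hχ1b : ∀ x, |χ1 x| ≤ 1 := by intro x; rw [hχ1val]; split <;> norm_num
    have hχ2b : ∀ x, |χ2 x| ≤ 1 := by intro x; rw [hχ2val]; split <;> norm_num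
    have hbsp : ∀ x, |s - p x| ≤ 1 := by
      intro x; rw [abs_le]; constructor <;> linarith [(hp01 x).1, (hp01 x).2]
    -- the four integrals
    set J1 := ∫ ω, (1 - p (X ω)) * χ1 (X ω) ∂μ with hJ1_def
    set J2 := ∫ ω, (1 - p (X ω)) * χ2 (X ω) ∂μ with hJ2_def
    set K1 := ∫ ω, (p (X ω) - c) * χ1 (X ω) ∂μ with hK1_def
    set K2 := ∫ ω, (p (X ω) - c) * χ2 (X ω) ∂μ with hK2_def
    clear_value J1 J2 K1 K2
    have int1pχ1 : Integrable (fun ω => (1 - p (X ω)) * χ1 (X ω)) μ :=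
      intg _ ((measurable_const.sub (hp.comp hX)).mul (hχ1meas.comp hX)) 1
        (fun ω => abs_mul_le_one (hb1p _) (hχ1b _))
    have int1pχ2 : Integrable (fun ω => (1 - p (X ω)) * χ2 (X ω)) μ :=
      intg _ ((measurable_const.sub (hp.comp hX)).mul (hχ2meas.comp hX)) 1
        (fun ω => abs_mul_le_one (hb1p _) (hχ2b _))
    have intpcχ1 : Integrable (fun ω => (p (X ω) - c) * χ1 (X ω)) μ :=
      intg _ (((hp.comp hX).sub measurable_const).mul (hχ1meas.comp hX)) 1
        (fun ω => abs_mul_le_one (hbpc _) (hχ1b _))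
    have intpcχ2 : Integrable (fun ω => (p (X ω) - c) * χ2 (X ω)) μ :=
      intg _ (((hp.comp hX).sub measurable_const).mul (hχ2meas.comp hX)) 1
        (fun ω => abs_mul_le_one (hbpc _) (hχ2b _))
    have intspχ1 : Integrable (fun ω => (s - p (X ω)) * χ1 (X ω)) μ :=
      intg _ ((measurable_const.sub (hp.comp hX)).mul (hχ1meas.comp hX)) 1
        (fun ω => abs_mul_le_one (hbsp _) (hχ1b _))
    have intpsχ2 : Integrable (fun ω => (p (X ω) - s) * χ2 (X ω)) μ :=
      intg _ (((hp.comp hX).sub measurable_const).mul (hχ2meas.comp hX)) 1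
        (fun ω => abs_mul_le_one (by rw [abs_sub_comm]; exact hbsp _) (hχ2b _))
    -- a generic reduction of such integrals to set integrals
    have hred : ∀ (F : 𝒳 → ℝ) (S : Set 𝒳) (hS : MeasurableSet S),
        ∫ ω, F (X ω) * (S.indicator (fun _ => (1:ℝ))) (X ω) ∂μ
          = ∫ ω in X ⁻¹' S, F (X ω) ∂μ := by
      intro F S hS
      rw [← integral_indicator (hX hS)]
      refine integral_congr_ae (ae_of_all _ fun ω => ?_)
      show F (X ω) * S.indicator (fun _ => (1:ℝ)) (X ω)
        = (X ⁻¹' S).indicator (fun ω => F (X ω)) ω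
      by_cases h : X ω ∈ S
      · rw [Set.indicator_of_mem h, Set.indicator_of_mem (show ω ∈ X ⁻¹' S from h)]
        ring
      · rw [Set.indicator_of_notMem h, Set.indicator_of_notMem (show ω ∉ X ⁻¹' S from h)]
        ring
    -- positivity of the weights
    have hJ1pos : 0 < J1 := by
      have heq : J1 = ∫ ω in X ⁻¹' S1, (1 - p (X ω)) ∂μ := by
        rw [hJ1_def, hχ1_def]; exact hred (fun x => 1 - p x) _ hS1meas
      rw [heq]
      refine setIntegral_pos' (hX hS1meas)
        ((intg (fun ω => 1 - p (X ω)) (measurable_const.sub (hp.comp hX)) 1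
          (fun ω => hb1p _)).integrableOn)
        (fun ω _ => by linarith [(hp01 (X ω)).2]) ?_
      refine lt_of_lt_of_le hs1' (measure_mono fun ω hω => ?_)
      have hx : X ω ∈ S1 := hω
      refine ⟨hω, ?_⟩
      have hxp : p (X ω) < s := hx.2
      simp only [mem_setOf_eq]
      linarith
    have hJ2pos : 0 < J2 := by
      have heq : J2 = ∫ ω in X ⁻¹' S2, (1 - p (X ω)) ∂μ := by
        rw [hJ2_def, hχ2_def]; exact hred (fun x => 1 - p x) _ hS2meas
      rw [heq]
      have hnull : μ (X ⁻¹' S2 ∩ {ω | p (X ω) = 1}) = 0 := by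
        refine measure_mono_null ?_ (hatomless a 1)
        rintro ω ⟨hω, h1⟩
        exact ⟨h1, hω.1.2⟩
      have hcover : X ⁻¹' S2 ⊆ (X ⁻¹' S2 ∩ {ω | 0 < 1 - p (X ω)})
          ∪ (X ⁻¹' S2 ∩ {ω | p (X ω) = 1}) := by
        intro ω hω
        rcases lt_or_eq_of_le (hp01 (X ω)).2 with h | h
        · exact Or.inl ⟨hω, by simp only [mem_setOf_eq]; linarith⟩
        · exact Or.inr ⟨hω, h⟩
      have hle2 : μ (X ⁻¹' S2) ≤ μ (X ⁻¹' S2 ∩ {ω | 0 < 1 - p (X ω)})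
          + μ (X ⁻¹' S2 ∩ {ω | p (X ω) = 1}) :=
        (measure_mono hcover).trans (measure_union_le _ _)
      rw [hnull, add_zero] at hle2
      refine setIntegral_pos' (hX hS2meas)
        ((intg (fun ω => 1 - p (X ω)) (measurable_const.sub (hp.comp hX)) 1
          (fun ω => hb1p _)).integrableOn)
        (fun ω _ => by linarith [(hp01 (X ω)).2])
        (lt_of_lt_of_le hs2' hle2)
    have hLpos1 : 0 < ∫ ω, (s - p (X ω)) * χ1 (X ω) ∂μ := by
      have heq : ∫ ω, (s - p (X ω)) * χ1 (X ω) ∂μ = ∫ ω in X ⁻¹' S1, (s - p (X ω)) ∂μ := by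
        rw [hχ1_def]; exact hred (fun x => s - p x) _ hS1meas
      rw [heq]
      refine setIntegral_pos' (hX hS1meas)
        ((intg (fun ω => s - p (X ω)) (measurable_const.sub (hp.comp hX)) 1
          (fun ω => hbsp _)).integrableOn)
        (fun ω hω => by
          have hx : X ω ∈ S1 := hω
          have hxp : p (X ω) < s := hx.2
          linarith) ?_
      refine lt_of_lt_of_le hs1' (measure_mono fun ω hω => ?_)
      have hx : X ω ∈ S1 := hω
      have hxp : p (X ω) < s := hx.2
      refine ⟨hω, ?_⟩
      simp only [mem_setOf_eq]
      linarith
    have hLpos2 : 0 < ∫ ω, (p (X ω) - s) * χ2 (X ω) ∂μ := by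
      have heq : ∫ ω, (p (X ω) - s) * χ2 (X ω) ∂μ = ∫ ω in X ⁻¹' S2, (p (X ω) - s) ∂μ := by
        rw [hχ2_def]; exact hred (fun x => p x - s) _ hS2meas
      rw [heq]
      refine setIntegral_pos' (hX hS2meas)
        ((intg (fun ω => p (X ω) - s) ((hp.comp hX).sub measurable_const) 1
          (fun ω => by rw [abs_sub_comm]; exact hbsp _)).integrableOn)
        (fun ω hω => by
          have hx : X ω ∈ S2 := hω
          have hxp : s < p (X ω) := hx.2
          linarith) ?_
      refine lt_of_lt_of_le hs2' (measure_mono fun ω hω => ?_)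
      have hx : X ω ∈ S2 := hω
      have hxp : s < p (X ω) := hx.2
      refine ⟨hω, ?_⟩
      simp only [mem_setOf_eq]
      linarith
    -- the exchange inequalities
    have hL1 : (s - c) * J1 - (1 - s) * K1
        = (1 - c) * ∫ ω, (s - p (X ω)) * χ1 (X ω) ∂μ := by
      rw [hJ1_def, hK1_def, ← integral_const_mul, ← integral_const_mul, ← integral_const_mul,
        ← integral_sub (int1pχ1.const_mul _) (intpcχ1.const_mul _)]
      exact integral_congr_ae (ae_of_all _ fun ω => by ring)
    have hL2 : (1 - s) * K2 - (s - c) * J2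
        = (1 - c) * ∫ ω, (p (X ω) - s) * χ2 (X ω) ∂μ := by
      rw [hJ2_def, hK2_def, ← integral_const_mul, ← integral_const_mul, ← integral_const_mul,
        ← integral_sub (intpcχ2.const_mul _) (int1pχ2.const_mul _)]
      exact integral_congr_ae (ae_of_all _ fun ω => by ring)
    have h1 : (1 - s) * K1 < (s - c) * J1 := by
      have hpos := mul_pos (show (0:ℝ) < 1 - c by linarith) hLpos1
      linarith [hL1]
    have h2 : (s - c) * J2 < (1 - s) * K2 := by
      have hpos := mul_pos (show (0:ℝ) < 1 - c by linarith) hLpos2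
      linarith [hL2]
    have hKJ : K1 * J2 < K2 * J1 := by
      have hA := mul_lt_mul_of_pos_right h1 hJ2pos
      have hB := mul_lt_mul_of_pos_right h2 hJ1pos
      have hC : (1 - s) * (K1 * J2) < (1 - s) * (K2 * J1) := by nlinarith [hA, hB]
      exact lt_of_mul_lt_mul_left hC (by linarith)
    -- the perturbation
    set δ := ε * J1 / (J1 + J2) with hδ_def
    set γ := ε * J2 / (J1 + J2) with hγ_def
    clear_value δ γ
    have hJJ : 0 < J1 + J2 := by linarith
    have hδpos : 0 < δ := by rw [hδ_def]; exact div_pos (mul_pos hε hJ1pos) hJJ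
    have hγpos : 0 < γ := by rw [hγ_def]; exact div_pos (mul_pos hε hJ2pos) hJJ
    have hδle : δ ≤ ε := by
      rw [hδ_def, div_le_iff₀ hJJ]
      nlinarith [mul_pos hε hJ2pos]
    have hγle : γ ≤ ε := by
      rw [hγ_def, div_le_iff₀ hJJ]
      nlinarith [mul_pos hε hJ1pos]
    have hbal : δ * J2 = γ * J1 := by
      rw [hδ_def, hγ_def]; ring
    set e' : 𝒳 → ℝ := fun x => m x + δ * χ2 x - γ * χ1 x with he'_def
    have he'meas : Measurable e' :=
      (hm.add (hχ2meas.const_mul δ)).sub (hχ1meas.const_mul γ)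
    have hS1S2 : ∀ x, x ∈ S1 → x ∈ S2 → False := by
      intro x hx1 hx2
      have := hx1.2
      have := hx2.2
      simp only [mem_setOf_eq] at *
      linarith
    have he'01 : ∀ x, e' x ∈ Icc (0:ℝ) 1 := by
      intro x
      have hval : e' x = m x + δ * χ2 x - γ * χ1 x := rfl
      by_cases h1 : x ∈ S1
      · have h2 : x ∉ S2 := fun h2 => hS1S2 x h1 h2
        have hmx1 : ε ≤ m x := h1.1.1.1
        have hmx2 : m x ≤ 1 - ε := h1.1.1.2
        rw [hval, hχ1val, hχ2val, if_pos h1, if_neg h2]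
        constructor
        · linarith
        · linarith
      · by_cases h2 : x ∈ S2
        · have hmx1 : ε ≤ m x := h2.1.1.1
          have hmx2 : m x ≤ 1 - ε := h2.1.1.2
          rw [hval, hχ1val, hχ2val, if_neg h1, if_pos h2]
          constructor
          · linarith
          · linarith
        · rw [hval, hχ1val, hχ2val, if_neg h1, if_neg h2]
          constructor
          · linarith [(hm01 x).1]
          · linarith [(hm01 x).2]
    have he'b : ∀ x, |e' x| ≤ 1 := habs e' he'01
    -- feasibility of the perturbed rule
    have inte'aux2 : Integrable (fun ω => δ * ((1 - p (X ω)) * χ2 (X ω))) μ :=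
      int1pχ2.const_mul δ
    have inte'aux1 : Integrable (fun ω => γ * ((1 - p (X ω)) * χ1 (X ω))) μ :=
      int1pχ1.const_mul γ
    have intm1p : Integrable (fun ω => (1 - p (X ω)) * m (X ω)) μ :=
      intg _ ((measurable_const.sub (hp.comp hX)).mul (hm.comp hX)) 1
        (fun ω => abs_mul_le_one (hb1p _) (hmb _))
    have intmita : ∀ b : G, Integrable
        (fun ω => (1 - p (X ω)) * (if g (X ω) = b then m (X ω) else 0)) μ := by
      intro b
      refine intg _ ((measurable_const.sub (hp.comp hX)).mul
        ((Measurable.ite (hg (measurableSet_singleton b)) hm measurable_const).comp hX)) 1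
        (fun ω => abs_mul_le_one (hb1p _) ?_)
      split
      · exact hmb _
      · norm_num
    have hnumb : ∀ b : G, ∫ ω in {ω | Y ω = 0 ∧ g (X ω) = b}, e' (X ω) ∂μ
        = ∫ ω in {ω | Y ω = 0 ∧ g (X ω) = b}, m (X ω) ∂μ := by
      intro b
      rw [hconva e' he'meas he'b b, hconva m hm hmb b]
      by_cases hba : b = a
      · subst hba
        have expand : ∀ ω, (1 - p (X ω)) * (if g (X ω) = b then e' (X ω) else 0)
            = ((1 - p (X ω)) * (if g (X ω) = b then m (X ω) else 0)
                + δ * ((1 - p (X ω)) * χ2 (X ω)))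
              - γ * ((1 - p (X ω)) * χ1 (X ω)) := by
          intro ω
          by_cases hgω : g (X ω) = b
          · rw [if_pos hgω, if_pos hgω]
            have : e' (X ω) = m (X ω) + δ * χ2 (X ω) - γ * χ1 (X ω) := rfl
            rw [this]; ring
          · have hx1 : X ω ∉ S1 := fun hmem => hgω hmem.1.2
            have hx2 : X ω ∉ S2 := fun hmem => hgω hmem.1.2
            rw [if_neg hgω, if_neg hgω, hχ1val, hχ2val, if_neg hx1, if_neg hx2]
            ring
        rw [integral_congr_ae (ae_of_all _ expand),
          integral_sub (show Integrable (fun ω => (1 - p (X ω)) * (if g (X ω) = b then m (X ω) else 0)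
              + δ * ((1 - p (X ω)) * χ2 (X ω))) μ from (intmita b).add inte'aux2) inte'aux1,
          integral_add (intmita b) inte'aux2,
          integral_const_mul, integral_const_mul, ← hJ2_def, ← hJ1_def]
        linarith [hbal]
      · refine integral_congr_ae (ae_of_all _ fun ω => ?_)
        show (1 - p (X ω)) * (if g (X ω) = b then e' (X ω) else 0)
          = (1 - p (X ω)) * (if g (X ω) = b then m (X ω) else 0)
        by_cases hgω : g (X ω) = b
        · have hx1 : X ω ∉ S1 := fun hmem => hba (hgω.symm.trans hmem.1.2)
          have hx2 : X ω ∉ S2 := fun hmem => hba (hgω.symm.trans hmem.1.2)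
          rw [if_pos hgω, if_pos hgω]
          have : e' (X ω) = m (X ω) + δ * χ2 (X ω) - γ * χ1 (X ω) := rfl
          rw [this, hχ1val, hχ2val, if_neg hx1, if_neg hx2]
          ring
        · rw [if_neg hgω, if_neg hgω]
    have htotb : ∫ ω in {ω | Y ω = 0}, e' (X ω) ∂μ
        = ∫ ω in {ω | Y ω = 0}, m (X ω) ∂μ := by
      rw [hconv e' he'meas he'b, hconv m hm hmb]
      have expand : ∀ ω, (1 - p (X ω)) * e' (X ω)
          = ((1 - p (X ω)) * m (X ω) + δ * ((1 - p (X ω)) * χ2 (X ω)))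
            - γ * ((1 - p (X ω)) * χ1 (X ω)) := by
        intro ω
        have : e' (X ω) = m (X ω) + δ * χ2 (X ω) - γ * χ1 (X ω) := rfl
        rw [this]; ring
      rw [integral_congr_ae (ae_of_all _ expand),
        integral_sub (show Integrable (fun ω => (1 - p (X ω)) * m (X ω)
            + δ * ((1 - p (X ω)) * χ2 (X ω))) μ from intm1p.add inte'aux2) inte'aux1,
        integral_add intm1p inte'aux2,
        integral_const_mul, integral_const_mul, ← hJ2_def, ← hJ1_def]
      linarith [hbal]
    have he'P : PredEq μ X Y g e' := by
      intro b
      rw [hnumb b, htotb]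
      exact hmP b
    -- the perturbed rule strictly improves the utility
    have intmpc : Integrable (fun ω => (p (X ω) - c) * m (X ω)) μ :=
      intg _ (((hp.comp hX).sub measurable_const).mul (hm.comp hX)) 1
        (fun ω => abs_mul_le_one (hbpc _) (hmb _))
    have hobj : ∫ ω, (p (X ω) - c) * e' (X ω) ∂μ
        = (∫ ω, (p (X ω) - c) * m (X ω) ∂μ) + (δ * K2 - γ * K1) := by
      have expand : ∀ ω, (p (X ω) - c) * e' (X ω)
          = ((p (X ω) - c) * m (X ω) + δ * ((p (X ω) - c) * χ2 (X ω)))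
            - γ * ((p (X ω) - c) * χ1 (X ω)) := by
        intro ω
        have : e' (X ω) = m (X ω) + δ * χ2 (X ω) - γ * χ1 (X ω) := rfl
        rw [this]; ring
      rw [integral_congr_ae (ae_of_all _ expand),
        integral_sub (show Integrable (fun ω => (p (X ω) - c) * m (X ω)
            + δ * ((p (X ω) - c) * χ2 (X ω))) μ from intmpc.add (intpcχ2.const_mul δ))
          (intpcχ1.const_mul γ),
        integral_add intmpc (intpcχ2.const_mul δ),
        integral_const_mul, integral_const_mul, ← hK2_def, ← hK1_def]
      ring
    have hgain : 0 < δ * K2 - γ * K1 := by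
      have hexp : δ * K2 - γ * K1 = ε * (K2 * J1 - K1 * J2) / (J1 + J2) := by
        rw [hδ_def, hγ_def]; ring
      rw [hexp]
      exact div_pos (mul_pos hε (by linarith)) hJJ
    have hle := hmax e' he'meas he'01 he'P
    rw [hU e' he'meas he'b, hU d hd (habs d hd01), hobj] at hle
    linarith [hum, hgain]
  -- conclusion: d = d' a.e.
  rw [ae_iff]
  refine measure_mono_null ?_
    (measure_iUnion_null fun a : G => measure_iUnion_null fun n : ℕ =>
      key a (1 / ((n : ℝ) + 1)) (by positivity))
  intro ω hω
  simp only [mem_setOf_eq] at hω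
  have hmx : m (X ω) = (d (X ω) + d' (X ω)) / 2 := rfl
  have hd1 := (hd01 (X ω)).1
  have hd2 := (hd01 (X ω)).2
  have hd1' := (hd01' (X ω)).1
  have hd2' := (hd01' (X ω)).2
  have h0 : 0 < m (X ω) := by
    by_contra h
    push_neg at h
    exact hω (by linarith)
  have h1 : m (X ω) < 1 := by
    by_contra h
    push_neg at h
    exact hω (by linarith)
  obtain ⟨n, hn⟩ := exists_nat_one_div_lt (K := ℝ)
    (show 0 < min (m (X ω)) (1 - m (X ω)) from lt_min h0 (by linarith))
  refine mem_iUnion.mpr ⟨g (X ω), mem_iUnion.mpr ⟨n, ⟨⟨?_, ?_⟩, rfl⟩⟩⟩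
  · linarith [min_le_left (m (X ω)) (1 - m (X ω))]
  · linarith [min_le_right (m (X ω)) (1 - m (X ω))]
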